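/- Let n, l, m be positive integers and let R ∈ ℝ^{(n·l)×(n·m)} be an arbitrary matrix. Define X* = (1/n) · Σ_{k=0}^{n−1} (Ω_n^k ⊗ I_l)ᵀ · R · (Ω_n^k ⊗ I_m). Then X* is block-circulant of order n with l×m blocks, and X* minimizes the Frobenius-norm distance to R over all block-circulant matrices: for every block-circulant X ∈ BC(n,l,m), ‖X* − R‖_F ≤ ‖X − R‖_F. -/

import Mathlib

open Matrix Kronecker

/-- The cyclic shift permutation matrix `Ω_n` with `(Ω_n)_{i,j} = 1` iff `j ≡ i+1 (mod n)`. -/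
def cyclicShift (n : ℕ) : Matrix (Fin n) (Fin n) ℝ :=
  Matrix.of fun i j => if (j : ℕ) = ((i : ℕ) + 1) % n then 1 else 0

/-- A block matrix is block-circulant of order `n` with `p × m` blocks if
`B = Σ_{k=0}^{n−1} Ω_n^k ⊗ b_k` for some blocks `b_k`. -/
def IsBlockCirculant {n p m : ℕ} (B : Matrix (Fin n × Fin p) (Fin n × Fin m) ℝ) : Prop :=
  ∃ b : Fin n → Matrix (Fin p) (Fin m) ℝ,
    B = ∑ k : Fin n, (cyclicShift n ^ (k : ℕ)) ⊗ₖ b k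

/-- The Frobenius norm `‖A‖_F = √(Σ_{i,j} a_{ij}²)`. -/
noncomputable def frobNorm {α β : Type*} [Fintype α] [Fintype β] (A : Matrix α β ℝ) : ℝ :=
  Real.sqrt (∑ i, ∑ j, (A i j) ^ 2)

lemma cyc_pow_apply (n : ℕ) (hn : 0 < n) (k : ℕ) (i j : Fin n) :
    (cyclicShift n ^ k) i j = if (j : ℕ) = ((i : ℕ) + k) % n then 1 else 0 := by
  induction k generalizing i j with
  | zero =>
    simp [Matrix.one_apply, Fin.ext_iff, Nat.mod_eq_of_lt i.isLt, eq_comm]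
  | succ k ih =>
    rw [pow_succ, Matrix.mul_apply]
    have h0 : ((i : ℕ) + k) % n < n := Nat.mod_lt _ hn
    rw [Finset.sum_eq_single (⟨((i : ℕ) + k) % n, h0⟩ : Fin n)]
    · rw [ih]
      simp only [cyclicShift, Matrix.of_apply]
      have h2 : (((i : ℕ) + k) % n + 1) % n = ((i : ℕ) + (k + 1)) % n := by
        rw [Nat.mod_add_mod, Nat.add_assoc]
      rw [h2]
      simp
    · intro t _ ht
      rw [ih]
      rw [if_neg, zero_mul]
      intro hc
      apply ht
      exact Fin.ext hc
    · intro h; exact absurd (Finset.mem_univ _) h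

lemma cyc_pow_fin (n : ℕ) [NeZero n] (k : Fin n) (i j : Fin n) :
    (cyclicShift n ^ (k : ℕ)) i j = if j = i + k then 1 else 0 := by
  have hn : 0 < n := Nat.pos_of_ne_zero (NeZero.ne n)
  rw [cyc_pow_apply n hn]
  simp [Fin.ext_iff, Fin.val_add]

lemma cyc_pow_fin' (n : ℕ) [NeZero n] (k : Fin n) (s i : Fin n) :
    (cyclicShift n ^ (k : ℕ)) s i = if s = i - k then 1 else 0 := by
  rw [cyc_pow_fin]
  exact if_congr (by rw [eq_sub_iff_add_eq]; exact eq_comm) rfl rfl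

lemma conj_apply (n l m : ℕ) [NeZero n]
    (R : Matrix (Fin n × Fin l) (Fin n × Fin m) ℝ) (k : Fin n)
    (i j : Fin n) (a : Fin l) (b : Fin m) :
    (((cyclicShift n ^ (k : ℕ)) ⊗ₖ (1 : Matrix (Fin l) (Fin l) ℝ))ᵀ * R *
        ((cyclicShift n ^ (k : ℕ)) ⊗ₖ (1 : Matrix (Fin m) (Fin m) ℝ))) (i, a) (j, b)
      = R (i - k, a) (j - k, b) := by
  simp only [Matrix.mul_apply, Matrix.transpose_apply, Matrix.kroneckerMap_apply,
    cyc_pow_fin', Matrix.one_apply, Fintype.sum_prod_type, ite_mul, mul_ite,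
    zero_mul, mul_zero, one_mul, mul_one]
  simp [Finset.sum_ite_eq', Finset.sum_ite_eq]

lemma circ_apply (n l m : ℕ) [NeZero n]
    (x : Fin n → Matrix (Fin l) (Fin m) ℝ) (i j : Fin n) (a : Fin l) (b : Fin m) :
    (∑ k : Fin n, (cyclicShift n ^ (k : ℕ)) ⊗ₖ x k) (i, a) (j, b) = x (j - i) a b := by
  simp only [Matrix.sum_apply, Matrix.kroneckerMap_apply, cyc_pow_fin]
  have h : ∀ k : Fin n, (j = i + k) = (k = j - i) := by
    intro k
    rw [eq_sub_iff_add_eq, add_comm]; exact propext eq_comm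
  simp only [h, ite_mul, zero_mul, one_mul]
  simp [Finset.sum_ite_eq']

lemma mean_min {n : ℕ} (hn : 0 < n) (r : Fin n → ℝ) (t : ℝ) :
    ∑ i, ((n : ℝ)⁻¹ * ∑ j, r j - r i) ^ 2 ≤ ∑ i, (t - r i) ^ 2 := by
  have hnr : (n : ℝ) ≠ 0 := Nat.cast_ne_zero.mpr hn.ne'
  set c : ℝ := (n : ℝ)⁻¹ * ∑ j, r j with hc
  have hsum : ∑ j, r j = (n : ℝ) * c := by
    rw [hc]; field_simp
  have key : ∑ i, (t - r i) ^ 2 = (∑ i, (c - r i) ^ 2) + (n : ℝ) * (t - c) ^ 2 := by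
    have h1 : ∀ i ∈ Finset.univ, (t - r i) ^ 2
        = (c - r i) ^ 2 + ((t - c) ^ 2 + 2 * (t - c) * (c - r i)) := fun i _ => by ring
    rw [Finset.sum_congr rfl h1, Finset.sum_add_distrib, Finset.sum_add_distrib,
      Finset.sum_const, ← Finset.mul_sum, Finset.sum_sub_distrib, Finset.sum_const,
      Finset.card_univ, Fintype.card_fin, hsum]
    simp [nsmul_eq_mul]
    try ring
  have hpos : 0 ≤ (n : ℝ) * (t - c) ^ 2 := by positivity
  linarith

lemma rearrange (n l m : ℕ) [NeZero n]
    (f : (Fin n × Fin l) → (Fin n × Fin m) → ℝ) :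
    ∑ p, ∑ q, f p q
      = ∑ db : Fin n × Fin m, ∑ a : Fin l, ∑ i : Fin n, f (i, a) (i + db.1, db.2) := by
  have h1 : ∀ p : Fin n × Fin l, ∑ q, f p q = ∑ db : Fin n × Fin m, f p (p.1 + db.1, db.2) := by
    intro p
    exact (Fintype.sum_equiv ((Equiv.addLeft p.1).prodCongr (Equiv.refl (Fin m)))
      (fun db => f p (p.1 + db.1, db.2)) (fun q => f p q) (fun db => rfl)).symm
  rw [Finset.sum_congr rfl (fun p _ => h1 p), Finset.sum_comm]
  refine Finset.sum_congr rfl fun db _ => ?_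
  rw [Fintype.sum_prod_type, Finset.sum_comm]

/-- **Optimal block-circulant approximation.** For an arbitrary matrix `R`, the matrix
`X* = (1/n)·Σ_k (Ω_n^k ⊗ I_l)ᵀ·R·(Ω_n^k ⊗ I_m)` is block-circulant and minimizes the
Frobenius-norm distance to `R` over all block-circulant matrices. -/
theorem blockCirculant_approximation
    (n l m : ℕ) (hn : 0 < n) (hl : 0 < l) (hm : 0 < m)
    (R : Matrix (Fin n × Fin l) (Fin n × Fin m) ℝ)
    (Xstar : Matrix (Fin n × Fin l) (Fin n × Fin m) ℝ)
    (hXstar : Xstar = (n : ℝ)⁻¹ • ∑ k : Fin n,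
      ((cyclicShift n ^ (k : ℕ)) ⊗ₖ (1 : Matrix (Fin l) (Fin l) ℝ))ᵀ * R *
        ((cyclicShift n ^ (k : ℕ)) ⊗ₖ (1 : Matrix (Fin m) (Fin m) ℝ))) :
    IsBlockCirculant Xstar ∧
    ∀ X : Matrix (Fin n × Fin l) (Fin n × Fin m) ℝ,
      IsBlockCirculant X → frobNorm (Xstar - R) ≤ frobNorm (X - R) := by
  haveI : NeZero n := ⟨hn.ne'⟩
  -- entry formula for Xstar
  have hX1 : ∀ (i j : Fin n) (a : Fin l) (b : Fin m),
      Xstar (i, a) (j, b) = (n : ℝ)⁻¹ * ∑ k : Fin n, R (i - k, a) (j - k, b) := by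
    intro i j a b
    rw [hXstar]
    simp only [Matrix.smul_apply, Matrix.sum_apply, smul_eq_mul]
    congr 1
    exact Finset.sum_congr rfl fun k _ => conj_apply n l m R k i j a b
  have hX2 : ∀ (i j : Fin n) (a : Fin l) (b : Fin m),
      Xstar (i, a) (j, b) = (n : ℝ)⁻¹ * ∑ s : Fin n, R (s, a) (s + (j - i), b) := by
    intro i j a b
    rw [hX1]
    congr 1
    refine Fintype.sum_equiv (Equiv.subLeft i)
      (fun k => R (i - k, a) (j - k, b)) (fun s => R (s, a) (s + (j - i), b)) fun k => ?_
    have h2 : i - k + (j - i) = j - k := by abel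
    simp only [Equiv.subLeft_apply, h2]
  constructor
  · refine ⟨fun d => (n : ℝ)⁻¹ • Matrix.of fun a b => ∑ s : Fin n, R (s, a) (s + d, b), ?_⟩
    ext ⟨i, a⟩ ⟨j, b⟩
    rw [circ_apply, hX2]
    simp [smul_eq_mul]
  · rintro X ⟨x, rfl⟩
    unfold frobNorm
    apply Real.sqrt_le_sqrt
    rw [rearrange n l m, rearrange n l m]
    refine Finset.sum_le_sum fun db _ => Finset.sum_le_sum fun a _ => ?_
    obtain ⟨d, b⟩ := db
    have hd : ∀ i : Fin n, (i + d) - i = d := fun i => by abel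
    have hLHS : ∀ i : Fin n, (Xstar - R) (i, a) (i + d, b)
        = (n : ℝ)⁻¹ * (∑ s : Fin n, R (s, a) (s + d, b)) - R (i, a) (i + d, b) := by
      intro i
      rw [Matrix.sub_apply, hX2]
      rw [hd]
    have hRHS : ∀ i : Fin n,
        ((∑ k : Fin n, (cyclicShift n ^ (k : ℕ)) ⊗ₖ x k) - R) (i, a) (i + d, b)
        = x d a b - R (i, a) (i + d, b) := by
      intro i
      rw [Matrix.sub_apply, circ_apply, hd]
    simp only [hLHS, hRHS]
    exact mean_min hn (fun i => R (i, a) (i + d, b)) (x d a b)
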